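/- For the class of additive valuations over goods and every n ≥ 2 and 1 ≤ q ≤ n, the nested share NS_{n,q}(v) is at least a 2n/(3n−1) fraction of MMS_n(v) for every additive valuation v. -/

import Mathlib

set_option maxHeartbeats 1000000


/-- The maximin share for `n` agents of the additive valuation on `Fin m` with item
values `w` (items indexed in non-increasing value order). -/
noncomputable def MMSn (n m : ℕ) (w : Fin m → ℝ) : ℝ :=
  sSup {x : ℝ | ∃ P : Fin n → Finset (Fin m),
    (∀ i j, i ≠ j → Disjoint (P i) (P j)) ∧
    Finset.univ.biUnion P = Finset.univ ∧
    ∀ j, x ≤ ∑ i ∈ P j, w i}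

/-- The nested share `NS_{n,q}` of the additive valuation on `Fin m` with item values
`w` sorted in non-increasing order: the best min-bundle value over partitions obtained
by choosing `k` with `n - q < k ≤ m`, a consecutive partition of the prefix
`{e_1,…,e_k}` given by monotone cutpoints `z` (with `z 0 = 0`, `z n = k`, and the first
`n - q` blocks singletons, i.e. `z j = j` for `j ≤ n - q`), and a consecutive partition
of the suffix given by monotone cutpoints `t` (with `t 0 = k`, `t n = m`) assigned to
the bundles in reverse order; bundle `j` (0-based) consists of the prefix block
`[z j, z (j+1))` together with the suffix block `[t (n-1-j), t (n-j))`. -/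
noncomputable def NS (n q m : ℕ) (w : Fin m → ℝ) : ℝ :=
  sSup {x : ℝ | ∃ (k : ℕ) (z t : ℕ → ℕ),
    n - q < k ∧ k ≤ m ∧
    Monotone z ∧ z 0 = 0 ∧ z n = k ∧ (∀ j, j ≤ n - q → z j = j) ∧
    Monotone t ∧ t 0 = k ∧ t n = m ∧
    ∀ j : Fin n, x ≤ ∑ i ∈ Finset.univ.filter (fun i : Fin m =>
      (z j.val ≤ i.val ∧ i.val < z (j.val + 1)) ∨
      (t (n - 1 - j.val) ≤ i.val ∧ i.val < t (n - j.val))), w i}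


lemma sum_Ico_shift (W : ℕ → ℝ) (s a b : ℕ) :
    ∑ x ∈ Finset.Ico (a+s) (b+s), W x = ∑ x ∈ Finset.Ico a b, W (x+s) := by
  rw [← Finset.map_add_right_Ico, Finset.sum_map]
  rfl

lemma filter_interval_sum {m : ℕ} (w : Fin m → ℝ) (a b : ℕ) :
    ∑ i ∈ Finset.univ.filter (fun i : Fin m => a ≤ i.val ∧ i.val < b), w i
      = ∑ x ∈ Finset.Ico a b, (if h : x < m then w ⟨x, h⟩ else 0) := by
  classical
  rw [show ∑ x ∈ Finset.Ico a b, (if h : x < m then w ⟨x, h⟩ else 0)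
      = ∑ x ∈ (Finset.Ico a b).filter (· < m), (if h : x < m then w ⟨x, h⟩ else 0) from
    (Finset.sum_subset (Finset.filter_subset _ _) (by
      intro x hx hnx
      rw [dif_neg]
      intro hlt
      exact hnx (Finset.mem_filter.2 ⟨hx, hlt⟩))).symm]
  refine Finset.sum_bij' (fun (i : Fin m) (_ : i ∈ Finset.univ.filter (fun i : Fin m => a ≤ i.val ∧ i.val < b)) => i.val)
    (fun x hx => (⟨x, (Finset.mem_filter.1 hx).2⟩ : Fin m)) ?_ ?_ ?_ ?_ ?_
  · intro i hi
    simp only [Finset.mem_filter, Finset.mem_univ, true_and] at hi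
    simp only [Finset.mem_filter, Finset.mem_Ico]
    exact ⟨⟨hi.1, hi.2⟩, i.isLt⟩
  · intro x hx
    simp only [Finset.mem_filter, Finset.mem_Ico] at hx
    simp only [Finset.mem_filter, Finset.mem_univ, true_and]
    exact hx.1
  · intro i hi; rfl
  · intro x hx; rfl
  · intro i hi
    rw [dif_pos i.isLt]


lemma pair_surgery (n m : ℕ) (W : ℕ → ℝ) (hant : Antitone W) (hpos : ∀ i, 0 ≤ W i)
    (hnm : n + 2 ≤ m) (V : ℝ) (Q : Fin (n+1) → Finset ℕ)
    (hd : ∀ i j, i ≠ j → Disjoint (Q i) (Q j))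
    (hb : ∀ i x, x ∈ Q i → x < m)
    (hv : ∀ i, V ≤ ∑ x ∈ Q i, W x) :
    ∃ R : Fin n → Finset ℕ, (∀ i j, i ≠ j → Disjoint (R i) (R j)) ∧
      (∀ i x, x ∈ R i → x < m ∧ x ≠ n ∧ x ≠ n + 1) ∧ (∀ i, V ≤ ∑ x ∈ R i, W x) := by
  classical
  have drop : ∀ d : Fin (n+1), (∀ j, j ≠ d → n ∉ Q j ∧ (n+1) ∉ Q j) →
      ∃ R : Fin n → Finset ℕ, (∀ i j, i ≠ j → Disjoint (R i) (R j)) ∧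
      (∀ i x, x ∈ R i → x < m ∧ x ≠ n ∧ x ≠ n + 1) ∧ (∀ i, V ≤ ∑ x ∈ R i, W x) := by
    intro d hdrop
    refine ⟨fun i => Q (d.succAbove i), ?_, ?_, fun i => hv _⟩
    · intro i j hij
      exact hd _ _ (fun h => hij (Fin.succAbove_right_injective h))
    · intro i x hx
      have hne := Fin.succAbove_ne d i
      refine ⟨hb _ _ hx, ?_, ?_⟩
      · intro h; exact (hdrop _ hne).1 (h ▸ hx)
      · intro h; exact (hdrop _ hne).2 (h ▸ hx)
  by_cases han : ∃ a, n ∈ Q a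
  · obtain ⟨a, haQ⟩ := han
    have hnotn : ∀ j, j ≠ a → n ∉ Q j := by
      intro j hj h
      exact Finset.disjoint_left.1 (hd j a hj) h haQ
    by_cases hbn : ∃ b, (n+1) ∈ Q b
    · obtain ⟨b, hbQ⟩ := hbn
      have hnotn1 : ∀ j, j ≠ b → (n+1) ∉ Q j := by
        intro j hj h
        exact Finset.disjoint_left.1 (hd j b hj) h hbQ
      by_cases hab : a = b
      · subst hab
        exact drop a (fun j hj => ⟨hnotn j hj, hnotn1 j hj⟩)
      -- main case : a ≠ b
      have hdisjAB := hd a b hab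
      have hsum2 : ∑ x ∈ ((Q a ∪ Q b).erase n).erase (n+1), W x
          = (∑ x ∈ Q a, W x) + (∑ x ∈ Q b, W x) - W n - W (n+1) := by
        have h1 : (n+1) ∈ (Q a ∪ Q b).erase n :=
          Finset.mem_erase.2 ⟨by omega, Finset.mem_union_right _ hbQ⟩
        rw [Finset.sum_erase_eq_sub h1, Finset.sum_erase_eq_sub (Finset.mem_union_left _ haQ),
          Finset.sum_union hdisjAB]
      set comb := ((Q a ∪ Q b).erase n).erase (n+1) with hcombdef
      have hcombsub : comb ⊆ Q a ∪ Q b :=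
        (Finset.erase_subset _ _).trans (Finset.erase_subset _ _)
      have hcombprop : ∀ x ∈ comb, x < m ∧ x ≠ n ∧ x ≠ n + 1 := by
        intro x hx
        have h1 := Finset.mem_erase.1 hx
        have h2 := Finset.mem_erase.1 h1.2
        have h3 : x < m := by
          rcases Finset.mem_union.1 (hcombsub hx) with h | h
          · exact hb _ _ h
          · exact hb _ _ h
        exact ⟨h3, h2.1, h1.1⟩
      have replace1 : ∀ C : Finset ℕ, (∀ j, j ≠ a → j ≠ b → Disjoint C (Q j)) →
          (∀ x ∈ C, x < m ∧ x ≠ n ∧ x ≠ n + 1) → V ≤ ∑ x ∈ C, W x →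
          ∃ R : Fin n → Finset ℕ, (∀ i j, i ≠ j → Disjoint (R i) (R j)) ∧
          (∀ i x, x ∈ R i → x < m ∧ x ≠ n ∧ x ≠ n + 1) ∧ (∀ i, V ≤ ∑ x ∈ R i, W x) := by
        intro C hCdisj hCprop hCval
        refine ⟨fun i => if b.succAbove i = a then C else Q (b.succAbove i), ?_, ?_, ?_⟩
        · intro i j hij
          have hs : b.succAbove i ≠ b.succAbove j :=
            fun h => hij (Fin.succAbove_right_injective h)
          by_cases h1 : b.succAbove i = a <;> by_cases h2 : b.succAbove j = a <;>
            simp only [h1, h2, if_pos, if_neg, if_true, if_false]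
          · exact absurd (h1.trans h2.symm) hs
          · exact hCdisj _ h2 (Fin.succAbove_ne b j)
          · exact (hCdisj _ h1 (Fin.succAbove_ne b i)).symm
          · exact hd _ _ hs
        · intro i x hx
          dsimp only at hx
          by_cases h1 : b.succAbove i = a
          · rw [if_pos h1] at hx; exact hCprop x hx
          · rw [if_neg h1] at hx
            exact ⟨hb _ _ hx, fun h => hnotn _ h1 (h ▸ hx),
              fun h => hnotn1 _ (Fin.succAbove_ne b i) (h ▸ hx)⟩
        · intro i
          dsimp only
          by_cases h1 : b.succAbove i = a
          · rw [if_pos h1]; exact hCval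
          · rw [if_neg h1]; exact hv _
      by_cases hTA : ∃ x ∈ Q a, x < n
      · obtain ⟨x, hxA, hxn⟩ := hTA
        refine replace1 comb (fun j hj1 hj2 => ?_) hcombprop ?_
        · refine Finset.disjoint_of_subset_left hcombsub ?_
          rw [Finset.disjoint_union_left]
          exact ⟨hd a j (fun h => hj1 h.symm), hd b j (fun h => hj2 h.symm)⟩
        · have hsubp : ({n, x} : Finset ℕ) ⊆ Q a := by
            intro y hy
            rcases Finset.mem_insert.1 hy with rfl | hy
            · exact haQ
            · rw [Finset.mem_singleton.1 hy]; exact hxA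
          have hge : W n + W x ≤ ∑ y ∈ Q a, W y := by
            have := Finset.sum_le_sum_of_subset_of_nonneg hsubp
              (fun y _ _ => hpos y)
            rwa [Finset.sum_pair (by omega : n ≠ x)] at this
          have hWx : W (n+1) ≤ W x := hant (by omega)
          have := hv b
          rw [hsum2]
          linarith
      by_cases hTB : ∃ y ∈ Q b, y < n
      · obtain ⟨y, hyB, hyn⟩ := hTB
        refine replace1 comb (fun j hj1 hj2 => ?_) hcombprop ?_
        · refine Finset.disjoint_of_subset_left hcombsub ?_
          rw [Finset.disjoint_union_left]
          exact ⟨hd a j (fun h => hj1 h.symm), hd b j (fun h => hj2 h.symm)⟩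
        · have hsubp : ({n+1, y} : Finset ℕ) ⊆ Q b := by
            intro z hz
            rcases Finset.mem_insert.1 hz with rfl | hz
            · exact hbQ
            · rw [Finset.mem_singleton.1 hz]; exact hyB
          have hge : W (n+1) + W y ≤ ∑ z ∈ Q b, W z := by
            have := Finset.sum_le_sum_of_subset_of_nonneg hsubp
              (fun z _ _ => hpos z)
            rwa [Finset.sum_pair (by omega : n + 1 ≠ y)] at this
          have hWy : W n ≤ W y := hant (by omega)
          have := hv a
          rw [hsum2]
          linarith
      push_neg at hTA hTB
      by_cases hfree : ∃ x, x < n ∧ ∀ i, x ∉ Q i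
      · obtain ⟨x, hxn, hxfree⟩ := hfree
        have hxnotc : x ∉ comb := fun h => by
          rcases Finset.mem_union.1 (hcombsub h) with h' | h'
          · exact hxfree a h'
          · exact hxfree b h'
        refine replace1 (insert x comb) (fun j hj1 hj2 => ?_) ?_ ?_
        · rw [Finset.disjoint_insert_left]
          refine ⟨hxfree j, Finset.disjoint_of_subset_left hcombsub ?_⟩
          rw [Finset.disjoint_union_left]
          exact ⟨hd a j (fun h => hj1 h.symm), hd b j (fun h => hj2 h.symm)⟩
        · intro z hz
          rcases Finset.mem_insert.1 hz with rfl | hz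
          · exact ⟨by omega, by omega, by omega⟩
          · exact hcombprop z hz
        · rw [Finset.sum_insert hxnotc, hsum2]
          have hWx : W (n+1) ≤ W x := hant (by omega)
          have hWn : W n ≤ ∑ y ∈ Q a, W y := by
            have := Finset.sum_le_sum_of_subset_of_nonneg
              (Finset.singleton_subset_iff.2 haQ) (fun y _ _ => hpos y)
            rwa [Finset.sum_singleton] at this
          have := hv b
          linarith
      · push_neg at hfree
        set f : ℕ → Fin (n+1) := fun x => if h : ∃ i, x ∈ Q i then h.choose else a with hfdef
        have hfmem : ∀ x, x < n → x ∈ Q (f x) := by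
          intro x hx
          have h := hfree x hx
          simp only [hfdef, dif_pos h]
          exact h.choose_spec
        have hfa : ∀ x, x < n → f x ≠ a := by
          intro x hx h
          have := hTA x (h ▸ hfmem x hx); omega
        have hfb : ∀ x, x < n → f x ≠ b := by
          intro x hx h
          have := hTB x (h ▸ hfmem x hx); omega
        have hcard : ((Finset.univ.erase b).erase a).card < (Finset.range n).card := by
          rw [Finset.card_erase_of_mem (Finset.mem_erase.2 ⟨hab, Finset.mem_univ a⟩),
            Finset.card_erase_of_mem (Finset.mem_univ b), Finset.card_univ,
            Fintype.card_fin, Finset.card_range]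
          omega
        have hmaps : ∀ x ∈ Finset.range n, f x ∈ (Finset.univ.erase b).erase a := by
          intro x hx
          have hx' := Finset.mem_range.1 hx
          exact Finset.mem_erase.2 ⟨hfa x hx', Finset.mem_erase.2 ⟨hfb x hx', Finset.mem_univ _⟩⟩
        obtain ⟨x, hx, y, hy, hxy, hfeq⟩ :=
          Finset.exists_ne_map_eq_of_card_lt_of_maps_to hcard hmaps
        rw [Finset.mem_range] at hx hy
        set c := f x with hcdef
        have hxc : x ∈ Q c := hfmem x hx
        have hyc : y ∈ Q c := by rw [hfeq]; exact hfmem y hy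
        have hca : c ≠ a := hfa x hx
        have hcb : c ≠ b := hfb x hx
        have hxa : x ∉ Q a := Finset.disjoint_left.1 (hd c a hca) hxc
        have hxb : x ∉ Q b := Finset.disjoint_left.1 (hd c b hcb) hxc
        have hya : y ∉ Q a := Finset.disjoint_left.1 (hd c a hca) hyc
        have hyb : y ∉ Q b := Finset.disjoint_left.1 (hd c b hcb) hyc
        set D1 := insert x ((Q a).erase n) with hD1def
        set D2 := insert y ((Q b).erase (n+1)) with hD2def
        have hD1sum : V ≤ ∑ z ∈ D1, W z := by
          rw [hD1def, Finset.sum_insert (fun h => hxa (Finset.erase_subset _ _ h)),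
            Finset.sum_erase_eq_sub haQ]
          have := hv a
          have hWx : W n ≤ W x := hant (by omega)
          linarith
        have hD2sum : V ≤ ∑ z ∈ D2, W z := by
          rw [hD2def, Finset.sum_insert (fun h => hyb (Finset.erase_subset _ _ h)),
            Finset.sum_erase_eq_sub hbQ]
          have := hv b
          have hWy : W (n+1) ≤ W y := hant (by omega)
          linarith
        have hD1prop : ∀ z ∈ D1, z < m ∧ z ≠ n ∧ z ≠ n + 1 := by
          intro z hz
          rcases Finset.mem_insert.1 hz with rfl | hz
          · exact ⟨by omega, by omega, by omega⟩
          · have h1 := Finset.mem_erase.1 hz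
            refine ⟨hb _ _ h1.2, h1.1, fun h => hnotn1 a hab (h ▸ h1.2)⟩
        have hD2prop : ∀ z ∈ D2, z < m ∧ z ≠ n ∧ z ≠ n + 1 := by
          intro z hz
          rcases Finset.mem_insert.1 hz with rfl | hz
          · exact ⟨by omega, by omega, by omega⟩
          · have h1 := Finset.mem_erase.1 hz
            refine ⟨hb _ _ h1.2, fun h => hnotn b (fun hh => hab hh.symm) (h ▸ h1.2), h1.1⟩
        have hD12 : Disjoint D1 D2 := by
          rw [hD1def, hD2def, Finset.disjoint_insert_left, Finset.disjoint_insert_right]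
          refine ⟨?_, fun h => hya (Finset.erase_subset _ _ h), ?_⟩
          · intro h
            rcases Finset.mem_insert.1 h with h | h
            · exact hxy h
            · exact hxb (Finset.erase_subset _ _ h)
          · exact Finset.disjoint_of_subset_left (Finset.erase_subset _ _)
              (Finset.disjoint_of_subset_right (Finset.erase_subset _ _) hdisjAB)
        have hD1Q : ∀ j, j ≠ a → j ≠ b → j ≠ c → Disjoint D1 (Q j) := by
          intro j hj1 hj2 hj3
          rw [hD1def, Finset.disjoint_insert_left]
          exact ⟨fun h => Finset.disjoint_left.1 (hd c j (fun hh => hj3 hh.symm)) hxc h,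
            Finset.disjoint_of_subset_left (Finset.erase_subset _ _)
              (hd a j (fun h => hj1 h.symm))⟩
        have hD2Q : ∀ j, j ≠ a → j ≠ b → j ≠ c → Disjoint D2 (Q j) := by
          intro j hj1 hj2 hj3
          rw [hD2def, Finset.disjoint_insert_left]
          exact ⟨fun h => Finset.disjoint_left.1 (hd c j (fun hh => hj3 hh.symm)) hyc h,
            Finset.disjoint_of_subset_left (Finset.erase_subset _ _)
              (hd b j (fun h => hj2 h.symm))⟩
        refine ⟨fun i => if b.succAbove i = a then D1 else if b.succAbove i = c then D2
          else Q (b.succAbove i), ?_, ?_, ?_⟩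
        · intro i j hij
          have hs : b.succAbove i ≠ b.succAbove j :=
            fun h => hij (Fin.succAbove_right_injective h)
          have hsbi := Fin.succAbove_ne b i
          have hsbj := Fin.succAbove_ne b j
          dsimp only
          split_ifs with h1 h2 h3 h4 h5 h6 h7 h8
          · exact absurd (h1.trans h2.symm) hs
          · exact hD12
          · exact hD1Q _ h2 hsbj h3
          · exact hD12.symm
          · exact absurd (h4.trans h6.symm) hs
          · exact hD2Q _ h5 hsbj h6
          · exact (hD1Q _ h1 hsbi h4).symm
          · exact (hD2Q _ h1 hsbi h4).symm
          · exact hd _ _ hs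
        · intro i z hz
          dsimp only at hz
          split_ifs at hz with h1 h2
          · exact hD1prop z hz
          · exact hD2prop z hz
          · exact ⟨hb _ _ hz, fun h => hnotn _ h1 (h ▸ hz),
              fun h => hnotn1 _ (Fin.succAbove_ne b i) (h ▸ hz)⟩
        · intro i
          dsimp only
          split_ifs with h1 h2
          · exact hD1sum
          · exact hD2sum
          · exact hv _
    · push_neg at hbn
      exact drop a (fun j hj => ⟨hnotn j hj, hbn j⟩)
  · push_neg at han
    by_cases hbn : ∃ b, (n+1) ∈ Q b
    · obtain ⟨b, hbQ⟩ := hbn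
      have hnotn1 : ∀ j, j ≠ b → (n+1) ∉ Q j := by
        intro j hj h
        exact Finset.disjoint_left.1 (hd j b hj) h hbQ
      exact drop b (fun j hj => ⟨han j, hnotn1 j hj⟩)
    · push_neg at hbn
      exact drop 0 (fun j _ => ⟨han j, hbn j⟩)

theorem key_lemma : ∀ n : ℕ, 1 ≤ n → ∀ (m : ℕ) (W : ℕ → ℝ), n ≤ m → Antitone W →
    (∀ i, 0 ≤ W i) → (∀ i, m ≤ i → W i = 0) → ∀ V : ℝ, 0 ≤ V →
    (∃ Q : Fin n → Finset ℕ, (∀ i j, i ≠ j → Disjoint (Q i) (Q j)) ∧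
      (∀ i x, x ∈ Q i → x < m) ∧ (∀ i, V ≤ ∑ x ∈ Q i, W x)) →
    ∃ t : ℕ → ℕ, Monotone t ∧ t 0 = n ∧ t n = m ∧
      ∀ j, j < n → (2*(n:ℝ))/(3*(n:ℝ)-1) * V ≤
        W j + ∑ x ∈ Finset.Ico (t (n-1-j)) (t (n-j)), W x := by
  intro n
  induction n with
  | zero => intro h; omega
  | succ n IH =>
    intro _ m W hnm hant hpos hzero V hV0 hQex
    obtain ⟨Q, hd, hb, hv⟩ := hQex
    classical
    -- basic real facts about N = n+1
    have hNcast : ((n+1 : ℕ) : ℝ) = (n : ℝ) + 1 := by push_cast; ring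
    set α : ℝ := (2*((n+1:ℕ):ℝ))/(3*((n+1:ℕ):ℝ)-1) with hαdef
    have hden : (0:ℝ) < 3*((n+1:ℕ):ℝ)-1 := by
      have : (1:ℝ) ≤ ((n+1:ℕ):ℝ) := by exact_mod_cast Nat.one_le_iff_ne_zero.2 (by omega)
      linarith
    have hα0 : 0 < α := by
      apply div_pos _ hden
      have : (1:ℝ) ≤ ((n+1:ℕ):ℝ) := by exact_mod_cast Nat.one_le_iff_ne_zero.2 (by omega)
      linarith
    have hα1 : α ≤ 1 := by
      rw [hαdef, div_le_one hden]
      have : (1:ℝ) ≤ ((n+1:ℕ):ℝ) := by exact_mod_cast Nat.one_le_iff_ne_zero.2 (by omega)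
      linarith
    have hαid : α * (3*((n+1:ℕ):ℝ)-1) = 2*((n+1:ℕ):ℝ) := by
      rw [hαdef, div_mul_cancel₀]
      exact ne_of_gt hden
    -- goal restated
    show ∃ t : ℕ → ℕ, Monotone t ∧ t 0 = n+1 ∧ t (n+1) = m ∧
      ∀ j, j < n+1 → α * V ≤ W j + ∑ x ∈ Finset.Ico (t (n+1-1-j)) (t (n+1-j)), W x
    have htriv : (α * V ≤ 0) → ∃ t : ℕ → ℕ, Monotone t ∧ t 0 = n+1 ∧ t (n+1) = m ∧
        ∀ j, j < n+1 → α * V ≤ W j + ∑ x ∈ Finset.Ico (t (n+1-1-j)) (t (n+1-j)), W x := by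
      intro hαV
      refine ⟨fun k => if k = 0 then n+1 else m, ?_, by simp, by simp, ?_⟩
      · apply monotone_nat_of_le_succ
        intro k
        rcases Nat.eq_zero_or_pos k with rfl | hk
        · simpa using hnm
        · simp [Nat.pos_iff_ne_zero.1 hk]
      · intro j hj
        refine le_trans hαV (add_nonneg (hpos j) (Finset.sum_nonneg (fun x _ => hpos x)))
    rcases eq_or_lt_of_le hV0 with hV0' | hVpos
    · exact htriv (by rw [← hV0', mul_zero])
    rcases Nat.eq_zero_or_pos n with rfl | hn1
    · -- base case N = 1
      have hα1' : α = 1 := by norm_num [hαdef]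
      have h0m : 0 < m := by omega
      refine ⟨fun k => if k = 0 then 1 else m, ?_, by simp, by simp, ?_⟩
      · apply monotone_nat_of_le_succ
        intro k
        rcases Nat.eq_zero_or_pos k with rfl | hk
        · simpa using hnm
        · simp [Nat.pos_iff_ne_zero.1 hk]
      · intro j hj
        have hj0 : j = 0 := by omega
        subst hj0
        simp only [Nat.sub_self, Nat.sub_zero]
        rw [hα1', one_mul]
        have h1 : V ≤ ∑ x ∈ Q 0, W x := hv 0
        have h2 : ∑ x ∈ Q 0, W x ≤ ∑ x ∈ Finset.Ico 0 m, W x :=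
          Finset.sum_le_sum_of_subset_of_nonneg
            (fun x hx => Finset.mem_Ico.2 ⟨Nat.zero_le _, hb 0 x hx⟩)
            (fun x _ _ => hpos x)
        have h3 : ∑ x ∈ Finset.Ico 0 m, W x = W 0 + ∑ x ∈ Finset.Ico 1 m, W x :=
          Finset.sum_eq_sum_Ico_succ_bot h0m W
        norm_num
        linarith
    -- now n ≥ 1, N = n+1 ≥ 2
    have hIH := IH hn1
    have hαmono : α ≤ (2*(n:ℝ))/(3*(n:ℝ)-1) := by
      have hd2 : (0:ℝ) < 3*(n:ℝ)-1 := by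
        have : (1:ℝ) ≤ (n:ℝ) := by exact_mod_cast hn1
        linarith
      rw [hαdef, div_le_div_iff₀ hden hd2]
      push_cast
      have h1n : (1:ℝ) ≤ (n:ℝ) := by exact_mod_cast hn1
      nlinarith
    by_cases hbig : α * V ≤ W n
    · -- Case 1': all base items big; singletons + last bundle takes the tail
      refine ⟨fun k => if k = 0 then n+1 else m, ?_, by simp, by simp, ?_⟩
      · apply monotone_nat_of_le_succ
        intro k
        rcases Nat.eq_zero_or_pos k with rfl | hk
        · simpa using hnm
        · simp [Nat.pos_iff_ne_zero.1 hk]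
      · intro j hj
        simp only
        rcases Nat.lt_or_ge j n with hjn | hjn
        · -- j < n : singleton bundle, empty chunk
          rw [if_neg (by omega : ¬ (n+1-1-j = 0)), if_neg (by omega : ¬ (n+1-j = 0)),
            Finset.Ico_self, Finset.sum_empty, add_zero]
          exact le_trans hbig (hant (le_of_lt hjn))
        · -- j = n : gets [n+1, m)
          have hjn' : j = n := by omega
          rw [hjn', if_pos (by omega : n+1-1-n = 0), if_neg (by omega : ¬ (n+1-n = 0))]
          have hs : (0:ℝ) ≤ ∑ x ∈ Finset.Ico (n+1) m, W x :=
            Finset.sum_nonneg (fun x _ => hpos x)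
          linarith
    by_cases h1 : α * V ≤ W 0
    · -- Case 1: reduction, give item 0 to bundle 0 as a singleton
      set W' : ℕ → ℝ := fun i => W (i+1) with hW'def
      have hW'ant : Antitone W' := fun i j hij => hant (by omega)
      have hW'pos : ∀ i, 0 ≤ W' i := fun i => hpos _
      have hW'zero : ∀ i, m-1 ≤ i → W' i = 0 := fun i hi => hzero _ (by omega)
      -- drop the bundle containing item 0 (if any)
      have hQ' : ∃ Q' : Fin n → Finset ℕ, (∀ i j, i ≠ j → Disjoint (Q' i) (Q' j)) ∧
          (∀ i x, x ∈ Q' i → x < m-1) ∧ (∀ i, V ≤ ∑ x ∈ Q' i, W' x) := by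
        have hdex : ∃ d : Fin (n+1), ∀ j, j ≠ d → 0 ∉ Q j := by
          by_cases h : ∃ d : Fin (n+1), 0 ∈ Q d
          · obtain ⟨d, hd0⟩ := h
            exact ⟨d, fun j hj h0 => Finset.disjoint_left.1 (hd j d hj) h0 hd0⟩
          · push_neg at h
            exact ⟨0, fun j _ => h j⟩
        obtain ⟨d, hdno⟩ := hdex
        refine ⟨fun i => (Q (d.succAbove i)).image (· - 1), ?_, ?_, ?_⟩
        · intro i j hij
          rw [Finset.disjoint_left]
          intro z hz1 hz2
          obtain ⟨x, hx, hx1⟩ := Finset.mem_image.1 hz1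
          obtain ⟨y, hy, hy1⟩ := Finset.mem_image.1 hz2
          have hxne : x ≠ 0 := fun h => hdno _ (Fin.succAbove_ne d i) (h ▸ hx)
          have hyne : y ≠ 0 := fun h => hdno _ (Fin.succAbove_ne d j) (h ▸ hy)
          have hxy : x = y := by omega
          have hss : d.succAbove i ≠ d.succAbove j :=
            fun h => hij (Fin.succAbove_right_injective h)
          exact Finset.disjoint_left.1 (hd _ _ hss) hx (hxy ▸ hy)
        · intro i z hz
          obtain ⟨x, hx, hx1⟩ := Finset.mem_image.1 hz
          have hxne : x ≠ 0 := fun h => hdno _ (Fin.succAbove_ne d i) (h ▸ hx)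
          have := hb _ _ hx
          omega
        · intro i
          rw [Finset.sum_image ?inj]
          case inj =>
            intro x hx y hy hxy
            have hxne : x ≠ 0 := fun h => hdno _ (Fin.succAbove_ne d i) (h ▸ hx)
            have hyne : y ≠ 0 := fun h => hdno _ (Fin.succAbove_ne d i) (h ▸ hy)
            beta_reduce at hxy
            omega
          have heq : ∀ x ∈ Q (d.succAbove i), W' (x - 1) = W x := by
            intro x hx
            have hxne : x ≠ 0 := fun h => hdno _ (Fin.succAbove_ne d i) (h ▸ hx)
            rw [hW'def]
            simp only
            congr 1
            omega
          rw [Finset.sum_congr rfl heq]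
          exact hv _
      obtain ⟨t', ht'mono, ht'0, ht'n, ht'cond⟩ :=
        hIH (m-1) W' (by omega) hW'ant hW'pos hW'zero V hV0 hQ'
      refine ⟨fun k => if k ≤ n then t' k + 1 else m, ?_, ?_, ?_, ?_⟩
      · apply monotone_nat_of_le_succ
        intro k
        rcases Nat.lt_or_ge k n with hk | hk
        · rw [if_pos (by omega), if_pos (by omega)]
          exact Nat.succ_le_succ (ht'mono (by omega))
        · rcases Nat.eq_or_lt_of_le hk with hk' | hk'
          · rw [if_pos (by omega), if_neg (by omega), ← hk', ht'n]
            omega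
          · rw [if_neg (by omega), if_neg (by omega)]
      · simp only
        rw [if_pos (Nat.zero_le n), ht'0]
      · simp only
        rw [if_neg (by omega)]
      · intro j hj
        simp only
        rcases Nat.eq_zero_or_pos j with rfl | hjpos
        · -- bundle 0 : singleton {0}
          have e1 : n+1-1-0 = n := by omega
          have e2 : n+1-0 = n+1 := by omega
          rw [e1, e2, if_pos le_rfl, if_neg (by omega), ht'n]
          rw [show m-1+1 = m by omega, Finset.Ico_self, Finset.sum_empty, add_zero]
          exact h1
        · -- bundle j ≥ 1 corresponds to old bundle j-1
          have hj' : j - 1 < n := by omega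
          have hcond := ht'cond (j-1) hj'
          have e1 : n+1-1-j ≤ n := by omega
          have e2 : n+1-j ≤ n := by omega
          rw [if_pos e1, if_pos e2]
          have e3 : n+1-1-j = n-1-(j-1) := by omega
          have e4 : n+1-j = n-(j-1) := by omega
          rw [e3, e4]
          have hshift : ∑ x ∈ Finset.Ico (t' (n-1-(j-1)) + 1) (t' (n-(j-1)) + 1), W x
              = ∑ x ∈ Finset.Ico (t' (n-1-(j-1))) (t' (n-(j-1))), W' x := by
            rw [sum_Ico_shift W 1 (t' (n-1-(j-1))) (t' (n-(j-1)))]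
          rw [hshift]
          have hWj : W' (j-1) = W j := by
            rw [hW'def]; simp only; congr 1; omega
          rw [← hWj]
          calc α * V ≤ (2*(n:ℝ))/(3*(n:ℝ)-1) * V := by
                exact mul_le_mul_of_nonneg_right hαmono hV0
            _ ≤ W' (j-1) + ∑ x ∈ Finset.Ico (t' (n-1-(j-1))) (t' (n-(j-1))), W' x := hcond
    by_cases h2 : α * V ≤ W n + W (n+1)
    · -- Case 2: pair reduction, bundle n gets items {n, n+1}
      have hWn : W n < α * V := lt_of_not_ge hbig
      have hWn1pos : 0 < W (n+1) := by linarith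
      have hmN : n + 2 ≤ m := by
        by_contra hc
        have : W (n+1) = 0 := hzero _ (by omega)
        linarith
      obtain ⟨Rp, hRd, hRprop, hRv⟩ := pair_surgery n m W hant hpos hmN V Q hd hb hv
      set g : ℕ → ℕ := fun x => if x < n then x else x - 2 with hgdef
      set W' : ℕ → ℝ := fun i => if i < n then W i else W (i+2) with hW'def
      have hW'eq : ∀ x, x ≠ n → x ≠ n+1 → W' (g x) = W x := by
        intro x hx1 hx2
        rcases Nat.lt_or_ge x n with h | h
        · simp only [hW'def, hgdef, if_pos h]
        · have hx3 : n + 2 ≤ x := by omega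
          simp only [hW'def, hgdef, if_neg (by omega : ¬ x < n)]
          rw [if_neg (by omega : ¬ x - 2 < n)]
          congr 1
          omega
      have hginj : ∀ x y, x ≠ n → x ≠ n+1 → y ≠ n → y ≠ n+1 → g x = g y → x = y := by
        intro x y hx1 hx2 hy1 hy2 hgxy
        simp only [hgdef] at hgxy
        split_ifs at hgxy <;> omega
      have hW'ant : Antitone W' := by
        intro i j hij
        simp only [hW'def]
        split_ifs with hi hj hj
        · exact hant hij
        · omega
        · exact hant (by omega)
        · exact hant (by omega)
      have hW'pos : ∀ i, 0 ≤ W' i := by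
        intro i; simp only [hW'def]; split_ifs <;> exact hpos _
      have hW'zero : ∀ i, m-2 ≤ i → W' i = 0 := by
        intro i hi
        simp only [hW'def]
        rw [if_neg (by omega : ¬ i < n)]
        exact hzero _ (by omega)
      have hQ' : ∃ Q' : Fin n → Finset ℕ, (∀ i j, i ≠ j → Disjoint (Q' i) (Q' j)) ∧
          (∀ i x, x ∈ Q' i → x < m-2) ∧ (∀ i, V ≤ ∑ x ∈ Q' i, W' x) := by
        refine ⟨fun i => (Rp i).image g, ?_, ?_, ?_⟩
        · intro i j hij
          rw [Finset.disjoint_left]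
          intro z hz1 hz2
          obtain ⟨x, hx, hx1⟩ := Finset.mem_image.1 hz1
          obtain ⟨y, hy, hy1⟩ := Finset.mem_image.1 hz2
          obtain ⟨_, hxn, hxn1⟩ := hRprop i x hx
          obtain ⟨_, hyn, hyn1⟩ := hRprop j y hy
          have : x = y := hginj x y hxn hxn1 hyn hyn1 (by rw [hx1, hy1])
          exact Finset.disjoint_left.1 (hRd i j hij) hx (this ▸ hy)
        · intro i z hz
          obtain ⟨x, hx, hx1⟩ := Finset.mem_image.1 hz
          obtain ⟨hxm, hxn, hxn1⟩ := hRprop i x hx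
          subst hx1
          simp only [hgdef]
          split_ifs <;> omega
        · intro i
          rw [Finset.sum_image (fun x hx y hy hxy =>
            hginj x y (hRprop i x hx).2.1 (hRprop i x hx).2.2
              (hRprop i y hy).2.1 (hRprop i y hy).2.2 hxy)]
          rw [Finset.sum_congr rfl (fun x hx => hW'eq x (hRprop i x hx).2.1 (hRprop i x hx).2.2)]
          exact hRv i
      obtain ⟨t', ht'mono, ht'0, ht'n, ht'cond⟩ :=
        hIH (m-2) W' (by omega) hW'ant hW'pos hW'zero V hV0 hQ'
      -- glue: t 0 = n+1, t k = t' (k-1) + 2 for 1 ≤ k ≤ n, t (n+1) = m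
      have ht'ge : ∀ k, n ≤ t' k := by
        intro k
        calc n = t' 0 := ht'0.symm
          _ ≤ t' k := ht'mono (Nat.zero_le k)
      have ht'le : ∀ k, k ≤ n → t' k ≤ m - 2 := by
        intro k hk
        calc t' k ≤ t' n := ht'mono hk
          _ = m - 2 := ht'n
      refine ⟨fun k => if k = 0 then n+1 else if k ≤ n then t' (k-1) + 2 else m, ?_, ?_, ?_, ?_⟩
      · apply monotone_nat_of_le_succ
        intro k
        beta_reduce
        rcases Nat.eq_zero_or_pos k with rfl | hk
        · rw [if_pos rfl, if_neg (show ¬(0+1 = 0) by omega), if_pos (show 0+1 ≤ n by omega)]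
          have := ht'ge (0+1-1)
          omega
        · rcases Nat.lt_or_ge (k+1) (n+1) with hk1 | hk1
          · rw [if_neg (show ¬(k = 0) by omega), if_pos (show k ≤ n by omega),
              if_neg (show ¬(k+1 = 0) by omega), if_pos (show k+1 ≤ n by omega)]
            have := ht'mono (show k-1 ≤ k+1-1 by omega)
            omega
          · rcases Nat.eq_or_lt_of_le hk1 with hk2 | hk2
            · rw [if_neg (show ¬(k = 0) by omega), if_pos (show k ≤ n by omega),
                if_neg (show ¬(k+1 = 0) by omega), if_neg (show ¬(k+1 ≤ n) by omega)]
              have := ht'le (k-1) (by omega)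
              omega
            · rw [if_neg (show ¬(k = 0) by omega), if_neg (show ¬(k ≤ n) by omega),
                if_neg (show ¬(k+1 = 0) by omega), if_neg (show ¬(k+1 ≤ n) by omega)]
      · simp
      · beta_reduce
        rw [if_neg (by omega), if_neg (by omega)]
      · intro j hj
        beta_reduce
        rcases Nat.eq_or_lt_of_le (Nat.le_of_lt_succ hj) with hjn | hjn
        · -- j = n : bundle {n, n+1}
          rw [hjn, show n+1-1-n = 0 from by omega, show n+1-n = 1 from by omega]
          rw [if_pos rfl, if_neg (show ¬(1 = 0) by omega), if_pos (show 1 ≤ n from hn1),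
            show (1:ℕ)-1 = 0 from rfl, ht'0]
          rw [show n+2 = n+1+1 from rfl, Nat.Ico_succ_singleton (n+1), Finset.sum_singleton]
          exact h2
        · -- j < n : corresponds to old bundle j
          have hcond := ht'cond j hjn
          have hWjeq : W j = W' j := by
            simp only [hW'def]
            rw [if_pos hjn]
          rw [show n+1-1-j = n-j from by omega]
          rcases Nat.eq_zero_or_pos j with rfl | hjpos
          · -- j = 0 : last chunk goes to m
            rw [show n+1-0 = n+1 from by omega, show n-0 = n from by omega]
            rw [if_neg (show ¬(n = 0) by omega), if_pos le_rfl,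
              if_neg (show ¬(n+1 = 0) by omega), if_neg (show ¬(n+1 ≤ n) by omega)]
            have hm2 : m = (m-2) + 2 := by omega
            rw [show (Finset.Ico (t' (n-1) + 2) m) = Finset.Ico (t' (n-1) + 2) ((m-2)+2) from by rw [← hm2]]
            rw [sum_Ico_shift W 2 (t' (n-1)) (m-2)]
            have hc : ∀ x ∈ Finset.Ico (t' (n-1)) (m-2), W (x+2) = W' x := by
              intro x hx
              have hxge : n ≤ x := le_trans (ht'ge _) (Finset.mem_Ico.1 hx).1
              simp only [hW'def]
              rw [if_neg (by omega)]
            rw [Finset.sum_congr rfl hc, hWjeq, show n-1 = n-1-0 from by omega,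
              show m-2 = t' n from ht'n.symm, show (n:ℕ) = n-0 from by omega]
            calc α * V ≤ (2*(n:ℝ))/(3*(n:ℝ)-1) * V := mul_le_mul_of_nonneg_right hαmono hV0
              _ ≤ _ := hcond
          · -- j ≥ 1
            rw [if_neg (show ¬(n-j = 0) by omega), if_pos (show n-j ≤ n by omega),
              if_neg (show ¬(n+1-j = 0) by omega), if_pos (show n+1-j ≤ n by omega)]
            rw [show n-j-1 = n-1-j from by omega, show n+1-j-1 = n-j from by omega]
            rw [sum_Ico_shift W 2 (t' (n-1-j)) (t' (n-j))]
            have hc : ∀ x ∈ Finset.Ico (t' (n-1-j)) (t' (n-j)), W (x+2) = W' x := by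
              intro x hx
              have hxge : n ≤ x := le_trans (ht'ge _) (Finset.mem_Ico.1 hx).1
              simp only [hW'def]
              rw [if_neg (by omega)]
            rw [Finset.sum_congr rfl hc, hWjeq]
            calc α * V ≤ (2*(n:ℝ))/(3*(n:ℝ)-1) * V := mul_le_mul_of_nonneg_right hαmono hV0
              _ ≤ _ := hcond
    -- Main case: greedy bag filling
    have hW0 : W 0 < α * V := lt_of_not_ge h1
    have hp : W n + W (n+1) < α * V := lt_of_not_ge h2
    have hWn2 : W (n+1) < α * V / 2 := by
      have := hant (show n ≤ n+1 by omega)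
      linarith
    have hWbase : ∀ i : ℕ, W (n - i) < α * V :=
      fun i => lt_of_le_of_lt (hant (Nat.zero_le _)) hW0
    have htotal : ((n+1:ℕ):ℝ) * V ≤ ∑ x ∈ Finset.Ico 0 m, W x := by
      have e1 : ((n+1:ℕ):ℝ) * V = ∑ _i : Fin (n+1), V := by
        rw [Finset.sum_const, Finset.card_univ, Fintype.card_fin, nsmul_eq_mul]
      have e2 : ∑ i : Fin (n+1), V ≤ ∑ i : Fin (n+1), ∑ x ∈ Q i, W x :=
        Finset.sum_le_sum (fun i _ => hv i)
      have e3 : ∑ i : Fin (n+1), ∑ x ∈ Q i, W x = ∑ x ∈ Finset.univ.biUnion Q, W x :=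
        (Finset.sum_biUnion (fun i _ j _ hij => hd i j hij)).symm
      have e4 : ∑ x ∈ Finset.univ.biUnion Q, W x ≤ ∑ x ∈ Finset.Ico 0 m, W x := by
        apply Finset.sum_le_sum_of_subset_of_nonneg
        · intro x hx
          obtain ⟨i, _, hxi⟩ := Finset.mem_biUnion.1 hx
          exact Finset.mem_Ico.2 ⟨Nat.zero_le _, hb i x hxi⟩
        · exact fun x _ _ => hpos x
      linarith
    have hex : ∀ (i ti : ℕ), ∃ c, (α * V ≤ W (n - i) + ∑ x ∈ Finset.Ico ti c, W x) ∨ m ≤ c :=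
      fun i ti => ⟨m, Or.inr le_rfl⟩
    set T : ℕ → ℕ := fun k => Nat.rec (n+1) (fun i ti => Nat.find (hex i ti)) k with hTdef
    have hT0 : T 0 = n+1 := rfl
    have hTs : ∀ i, T (i+1) = Nat.find (hex i (T i)) := fun i => rfl
    have hTm : ∀ i, T i ≤ m := by
      intro i
      cases i with
      | zero => exact hnm
      | succ i => rw [hTs i]; exact Nat.find_min' _ (Or.inr le_rfl)
    have hTmono1 : ∀ i, T i ≤ T (i+1) := by
      intro i
      by_contra hcon
      push_neg at hcon
      have hspec := Nat.find_spec (hex i (T i))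
      rw [← hTs i] at hspec
      rcases hspec with hl | hr
      · rw [Finset.Ico_eq_empty (by omega), Finset.sum_empty, add_zero] at hl
        exact absurd hl (not_le.2 (hWbase i))
      · have := hTm i
        omega
    have hTge : ∀ i, n+1 ≤ T i := by
      intro i
      induction i with
      | zero => exact le_of_eq hT0.symm
      | succ i ih => exact le_trans ih (hTmono1 i)
    have hTmono : Monotone T := monotone_nat_of_le_succ hTmono1
    have hDlt : ∀ i, W (n - i) + ∑ x ∈ Finset.Ico (T i) (T (i+1)), W x < 3/2 * (α * V) := by
      intro i
      by_cases hgood : α * V ≤ W (n - i) + ∑ x ∈ Finset.Ico (T i) (T (i+1)), W x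
      · have hne : T i < T (i+1) := by
          rcases Nat.lt_or_ge (T i) (T (i+1)) with h | h
          · exact h
          · exfalso
            rw [Finset.Ico_eq_empty (by omega), Finset.sum_empty, add_zero] at hgood
            exact absurd hgood (not_le.2 (hWbase i))
        have hmin := Nat.find_min (hex i (T i))
          (show T (i+1) - 1 < Nat.find (hex i (T i)) from by rw [← hTs i]; omega)
        push_neg at hmin
        obtain ⟨hmin1, hmin2⟩ := hmin
        have hsplit : ∑ x ∈ Finset.Ico (T i) (T (i+1)), W x
            = (∑ x ∈ Finset.Ico (T i) (T (i+1) - 1), W x) + W (T (i+1) - 1) := by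
          have h := Finset.sum_Ico_succ_top (show T i ≤ T (i+1) - 1 by omega) W
          rw [show T (i+1) - 1 + 1 = T (i+1) by omega] at h
          linarith [h]
        have hWlast : W (T (i+1) - 1) < α * V / 2 :=
          lt_of_le_of_lt (hant (show n+1 ≤ T (i+1) - 1 from by have := hTge i; omega)) hWn2
        rw [hsplit]
        linarith
      · push_neg at hgood
        have : 0 < α * V := mul_pos hα0 hVpos
        linarith
    have htel : ∀ i, ∑ x ∈ Finset.Ico (n+1) (T i), W x
        = ∑ j ∈ Finset.range i, ∑ x ∈ Finset.Ico (T j) (T (j+1)), W x := by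
      intro i
      induction i with
      | zero => rw [hT0, Finset.Ico_self, Finset.sum_empty, Finset.range_zero, Finset.sum_empty]
      | succ i ih =>
        rw [Finset.sum_range_succ, ← ih, Finset.sum_Ico_consecutive W (hTge i) (hTmono1 i)]
    have hrev : ∀ i, i ≤ n+1 → ∑ j ∈ Finset.range i, W (n - j)
        = ∑ x ∈ Finset.Ico (n+1-i) (n+1), W x := by
      intro i
      induction i with
      | zero => intro _; simp
      | succ i ih =>
        intro hi
        rw [Finset.sum_range_succ, ih (by omega), show n+1-(i+1) = n-i from by omega,
          Finset.sum_eq_sum_Ico_succ_bot (show n-i < n+1 by omega) W,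
          show n-i+1 = n+1-i from by omega]
        ring
    have hdecomp : ∀ i, i ≤ n → ∑ x ∈ Finset.Ico 0 m, W x
        = (∑ x ∈ Finset.Ico 0 (n-i), W x) + W (n-i)
          + (∑ j ∈ Finset.range i, (W (n-j) + ∑ x ∈ Finset.Ico (T j) (T (j+1)), W x))
          + ∑ x ∈ Finset.Ico (T i) m, W x := by
      intro i hi
      have e1 : ∑ x ∈ Finset.Ico 0 m, W x
          = (∑ x ∈ Finset.Ico 0 (n+1), W x) + ∑ x ∈ Finset.Ico (n+1) m, W x :=
        (Finset.sum_Ico_consecutive W (by omega) hnm).symm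
      have e2 : ∑ x ∈ Finset.Ico (n+1) m, W x
          = (∑ x ∈ Finset.Ico (n+1) (T i), W x) + ∑ x ∈ Finset.Ico (T i) m, W x :=
        (Finset.sum_Ico_consecutive W (hTge i) (hTm i)).symm
      have e3 : ∑ x ∈ Finset.Ico 0 (n+1), W x
          = (∑ x ∈ Finset.Ico 0 (n+1-(i+1)), W x) + ∑ x ∈ Finset.Ico (n+1-(i+1)) (n+1), W x :=
        (Finset.sum_Ico_consecutive W (by omega) (by omega)).symm
      have e4 := hrev (i+1) (by omega)
      have e5 : ∑ j ∈ Finset.range (i+1), W (n-j)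
          = (∑ j ∈ Finset.range i, W (n-j)) + W (n-i) := Finset.sum_range_succ _ i
      have e6 := htel i
      rw [Finset.sum_add_distrib, e1, e2, e3, ← e4, e5, ← e6,
        show n+1-(i+1) = n-i from by omega]
      ring
    have hAV0 : 0 < α * V := mul_pos hα0 hVpos
    have hαid' : α * (3*(n:ℝ)+2) = 2*(n:ℝ)+2 := by
      rw [hNcast] at hαid
      linear_combination hαid
    have hgoodmid : ∀ i, i < n →
        α * V ≤ W (n - i) + ∑ x ∈ Finset.Ico (T i) (T (i+1)), W x := by
      intro i hin
      by_contra hbad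
      push_neg at hbad
      have hspec := Nat.find_spec (hex i (T i))
      rw [← hTs i] at hspec
      have hTim : T (i+1) = m := by
        rcases hspec with hl | hr
        · exact absurd hl (not_le.2 hbad)
        · have := hTm (i+1); omega
      have hdec := hdecomp i (by omega)
      have hcasti : (i:ℝ) ≤ (n:ℝ) - 1 := by
        have : (i:ℝ) + 1 ≤ (n:ℝ) := by exact_mod_cast hin
        linarith
      have hcastni : ((n-i:ℕ):ℝ) = (n:ℝ) - (i:ℝ) := Nat.cast_sub (by omega)
      have hb1 : ∑ x ∈ Finset.Ico 0 (n-i), W x ≤ ((n:ℝ) - (i:ℝ)) * (α * V) := by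
        have h1 : ∑ x ∈ Finset.Ico 0 (n-i), W x ≤ (Finset.Ico 0 (n-i)).card • (W 0) :=
          Finset.sum_le_card_nsmul _ _ _ (fun x _ => hant (Nat.zero_le x))
        rw [Nat.card_Ico, Nat.sub_zero, nsmul_eq_mul, hcastni] at h1
        have h2 : (0:ℝ) ≤ (n:ℝ) - (i:ℝ) := by linarith
        calc ∑ x ∈ Finset.Ico 0 (n-i), W x ≤ ((n:ℝ) - (i:ℝ)) * W 0 := h1
          _ ≤ ((n:ℝ) - (i:ℝ)) * (α * V) := mul_le_mul_of_nonneg_left hW0.le h2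
      have hb2 : ∑ j ∈ Finset.range i, (W (n-j) + ∑ x ∈ Finset.Ico (T j) (T (j+1)), W x)
          ≤ (i:ℝ) * (3/2*(α*V)) := by
        have h1 := Finset.sum_le_card_nsmul (Finset.range i) _ (3/2*(α*V))
          (fun j _ => (hDlt j).le)
        rwa [Finset.card_range, nsmul_eq_mul] at h1
      have hb3 : W (n-i) + ∑ x ∈ Finset.Ico (T i) m, W x < α*V := by
        rw [← hTim]; exact hbad
      have htotal' : ((n:ℝ)+1)*V ≤ ∑ x ∈ Finset.Ico 0 m, W x := by
        rw [hNcast] at htotal; exact htotal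
      have hprod : 0 ≤ (α*V) * ((n:ℝ) - 1 - (i:ℝ)) :=
        mul_nonneg hAV0.le (by linarith)
      nlinarith [hb1, hb2, hb3, hdec, htotal', hαid', hAV0, hVpos, hprod]
    -- final construction
    refine ⟨fun k => if k < n+1 then T k else m, ?_, ?_, ?_, ?_⟩
    · apply monotone_nat_of_le_succ
      intro k
      beta_reduce
      rcases Nat.lt_or_ge (k+1) (n+1) with hk | hk
      · rw [if_pos (by omega), if_pos hk]
        exact hTmono1 k
      · rcases Nat.eq_or_lt_of_le hk with hk2 | hk2
        · rw [if_pos (by omega), if_neg (by omega)]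
          exact hTm k
        · rw [if_neg (by omega), if_neg (by omega)]
    · beta_reduce
      rw [if_pos (by omega)]
      exact hT0
    · beta_reduce
      rw [if_neg (by omega)]
    · intro j hj
      beta_reduce
      rw [show n+1-1-j = n-j from by omega]
      rcases Nat.eq_zero_or_pos j with rfl | hjpos
      · -- j = 0 : the final bundle gets [T n, m)
        rw [show n+1-0 = n+1 from by omega, show n-0 = n from by omega,
          if_pos (by omega : n < n+1), if_neg (by omega : ¬ (n+1 < n+1))]
        have hdec := hdecomp n le_rfl
        rw [Nat.sub_self, Finset.Ico_self, Finset.sum_empty] at hdec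
        have hDsum : ∑ j ∈ Finset.range n, (W (n-j) + ∑ x ∈ Finset.Ico (T j) (T (j+1)), W x)
            < (n:ℝ) * (3/2*(α*V)) := by
          have hne : (Finset.range n).Nonempty := ⟨0, Finset.mem_range.2 hn1⟩
          have h1 := Finset.sum_lt_sum_of_nonempty hne (fun j _ => hDlt j)
          rwa [Finset.sum_const, Finset.card_range, nsmul_eq_mul] at h1
        have htotal' : ((n:ℝ)+1)*V ≤ ∑ x ∈ Finset.Ico 0 m, W x := by
          rw [hNcast] at htotal; exact htotal
        nlinarith [hdec, hDsum, htotal', hαid', hAV0, hVpos]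
      · -- j ≥ 1 : the greedy bundles
        rw [if_pos (by omega : n-j < n+1), if_pos (by omega : n+1-j < n+1)]
        have h := hgoodmid (n-j) (by omega)
        rw [show n-(n-j) = j from by omega, show n-j+1 = n+1-j from by omega] at h
        exact h


/-- For additive valuations over goods and every `n ≥ 2`, `1 ≤ q ≤ n`, the nested share
`NS_{n,q}` is at least a `2n/(3n−1)` fraction of the maximin share. -/
theorem ns_approximates_mms (n q m : ℕ) (hn : 2 ≤ n) (hq1 : 1 ≤ q) (hqn : q ≤ n)
    (w : Fin m → ℝ) (hw : ∀ i, 0 ≤ w i)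
    (hsorted : ∀ i j : Fin m, i ≤ j → w j ≤ w i) :
    (2 * (n : ℝ)) / (3 * (n : ℝ) - 1) * MMSn n m w ≤ NS n q m w := by
  classical
  have hn1 : (1:ℝ) ≤ (n:ℝ) := by exact_mod_cast (by omega : 1 ≤ n)
  have hden : (0:ℝ) < 3*(n:ℝ)-1 := by linarith
  have hc0 : (0:ℝ) < (2*(n:ℝ))/(3*(n:ℝ)-1) := div_pos (by linarith) hden
  unfold NS MMSn
  -- bounded above
  have hbdd : BddAbove {x : ℝ | ∃ (k : ℕ) (z t : ℕ → ℕ),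
      n - q < k ∧ k ≤ m ∧
      Monotone z ∧ z 0 = 0 ∧ z n = k ∧ (∀ j, j ≤ n - q → z j = j) ∧
      Monotone t ∧ t 0 = k ∧ t n = m ∧
      ∀ j : Fin n, x ≤ ∑ i ∈ Finset.univ.filter (fun i : Fin m =>
        (z j.val ≤ i.val ∧ i.val < z (j.val + 1)) ∨
        (t (n - 1 - j.val) ≤ i.val ∧ i.val < t (n - j.val))), w i} := by
    refine ⟨∑ i ∈ Finset.univ, w i, ?_⟩
    rintro x ⟨k, z, t, _, _, _, _, _, _, _, _, _, hval⟩
    refine le_trans (hval ⟨0, by omega⟩) ?_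
    exact Finset.sum_le_sum_of_subset_of_nonneg (Finset.filter_subset _ _)
      (fun i _ _ => hw i)
  by_cases hmn : n ≤ m
  · -- main case
    set W : ℕ → ℝ := fun x => if h : x < m then w ⟨x, h⟩ else 0 with hWdef
    have hWfin : ∀ i : Fin m, W i.val = w i := by
      intro i
      simp only [hWdef]
      rw [dif_pos i.isLt]
    have hWant : Antitone W := by
      intro i j hij
      simp only [hWdef]
      split_ifs with h1 h2 h2
      · exact hsorted ⟨i, h2⟩ ⟨j, h1⟩ hij
      · omega
      · exact hw _
      · exact le_rfl
    have hWpos : ∀ i, 0 ≤ W i := by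
      intro i
      simp only [hWdef]
      split_ifs
      · exact hw _
      · exact le_rfl
    have hWzero : ∀ i, m ≤ i → W i = 0 := by
      intro i hi
      simp only [hWdef]
      rw [dif_neg (by omega)]
    have hNSmem : ∀ V : ℝ, 0 ≤ V →
        (∃ Q : Fin n → Finset ℕ, (∀ i j, i ≠ j → Disjoint (Q i) (Q j)) ∧
          (∀ i x, x ∈ Q i → x < m) ∧ (∀ i, V ≤ ∑ x ∈ Q i, W x)) →
        (2*(n:ℝ))/(3*(n:ℝ)-1) * V ≤ sSup {x : ℝ | ∃ (k : ℕ) (z t : ℕ → ℕ),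
          n - q < k ∧ k ≤ m ∧
          Monotone z ∧ z 0 = 0 ∧ z n = k ∧ (∀ j, j ≤ n - q → z j = j) ∧
          Monotone t ∧ t 0 = k ∧ t n = m ∧
          ∀ j : Fin n, x ≤ ∑ i ∈ Finset.univ.filter (fun i : Fin m =>
            (z j.val ≤ i.val ∧ i.val < z (j.val + 1)) ∨
            (t (n - 1 - j.val) ≤ i.val ∧ i.val < t (n - j.val))), w i} := by
      intro V hV hQ
      obtain ⟨t, htmono, ht0, htn, hcond⟩ :=
        key_lemma n (by omega) m W hmn hWant hWpos hWzero V hV hQ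
      apply le_csSup hbdd
      refine ⟨n, fun j => j, t, by omega, hmn, monotone_id, rfl, rfl, fun j _ => rfl,
        htmono, ht0, htn, ?_⟩
      intro j
      have hjm : j.val < m := lt_of_lt_of_le j.isLt hmn
      have han : n ≤ t (n - 1 - j.val) := by
        have h := htmono (Nat.zero_le (n - 1 - j.val))
        rw [ht0] at h
        exact h
      have hset : Finset.univ.filter (fun i : Fin m =>
            (j.val ≤ i.val ∧ i.val < j.val + 1) ∨
            (t (n - 1 - j.val) ≤ i.val ∧ i.val < t (n - j.val)))
          = Finset.univ.filter (fun i : Fin m => j.val ≤ i.val ∧ i.val < j.val + 1)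
            ∪ Finset.univ.filter (fun i : Fin m =>
              t (n - 1 - j.val) ≤ i.val ∧ i.val < t (n - j.val)) :=
        Finset.filter_or _ _ _
      have hdisj : Disjoint
          (Finset.univ.filter (fun i : Fin m => j.val ≤ i.val ∧ i.val < j.val + 1))
          (Finset.univ.filter (fun i : Fin m =>
            t (n - 1 - j.val) ≤ i.val ∧ i.val < t (n - j.val))) := by
        rw [Finset.disjoint_left]
        intro i hi1 hi2
        rw [Finset.mem_filter] at hi1 hi2
        have := j.isLt
        omega
      have hsingle : Finset.univ.filter (fun i : Fin m => j.val ≤ i.val ∧ i.val < j.val + 1)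
          = {(⟨j.val, hjm⟩ : Fin m)} := by
        ext i
        simp only [Finset.mem_filter, Finset.mem_univ, true_and, Finset.mem_singleton,
          Fin.ext_iff]
        omega
      have hIcoW : ∑ x ∈ Finset.Ico (t (n - 1 - j.val)) (t (n - j.val)),
          (if h : x < m then w ⟨x, h⟩ else 0)
          = ∑ x ∈ Finset.Ico (t (n - 1 - j.val)) (t (n - j.val)), W x := by
        rw [hWdef]
      calc (2*(n:ℝ))/(3*(n:ℝ)-1) * V
          ≤ W j.val + ∑ x ∈ Finset.Ico (t (n - 1 - j.val)) (t (n - j.val)), W x :=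
            hcond j.val j.isLt
        _ = ∑ i ∈ Finset.univ.filter (fun i : Fin m =>
              (j.val ≤ i.val ∧ i.val < j.val + 1) ∨
              (t (n - 1 - j.val) ≤ i.val ∧ i.val < t (n - j.val))), w i := by
            rw [hset, Finset.sum_union hdisj, hsingle, Finset.sum_singleton,
              filter_interval_sum w, hIcoW]
            congr 1
            rw [← hWfin ⟨j.val, hjm⟩]
        _ = _ := rfl
    -- MMS side
    have hne : ({x : ℝ | ∃ P : Fin n → Finset (Fin m),
        (∀ i j, i ≠ j → Disjoint (P i) (P j)) ∧
        Finset.univ.biUnion P = Finset.univ ∧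
        ∀ j, x ≤ ∑ i ∈ P j, w i}).Nonempty := by
      refine ⟨0, fun i => if i = (⟨0, by omega⟩ : Fin n) then Finset.univ else ∅, ?_, ?_, ?_⟩
      · intro i j hij
        dsimp only
        split_ifs with h1 h2 h2
        · exact absurd (h1.trans h2.symm) hij
        · simp
        · simp
        · simp
      · apply Finset.eq_univ_of_forall
        intro x
        exact Finset.mem_biUnion.2 ⟨⟨0, by omega⟩, Finset.mem_univ _, by simp⟩
      · intro j
        dsimp only
        split_ifs
        · exact Finset.sum_nonneg (fun i _ => hw i)
        · simp
    have hforall : ∀ x ∈ {x : ℝ | ∃ P : Fin n → Finset (Fin m),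
        (∀ i j, i ≠ j → Disjoint (P i) (P j)) ∧
        Finset.univ.biUnion P = Finset.univ ∧
        ∀ j, x ≤ ∑ i ∈ P j, w i},
        x ≤ (sSup {x : ℝ | ∃ (k : ℕ) (z t : ℕ → ℕ),
          n - q < k ∧ k ≤ m ∧
          Monotone z ∧ z 0 = 0 ∧ z n = k ∧ (∀ j, j ≤ n - q → z j = j) ∧
          Monotone t ∧ t 0 = k ∧ t n = m ∧
          ∀ j : Fin n, x ≤ ∑ i ∈ Finset.univ.filter (fun i : Fin m =>
            (z j.val ≤ i.val ∧ i.val < z (j.val + 1)) ∨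
            (t (n - 1 - j.val) ≤ i.val ∧ i.val < t (n - j.val))), w i})
          / ((2*(n:ℝ))/(3*(n:ℝ)-1)) := by
      rintro x ⟨P, hPd, hPcov, hPval⟩
      rw [le_div_iff₀ hc0, mul_comm]
      refine le_trans (mul_le_mul_of_nonneg_left (le_max_left x 0) hc0.le) ?_
      apply hNSmem (max x 0) (le_max_right x 0)
      refine ⟨fun i => (P i).image Fin.val, ?_, ?_, ?_⟩
      · intro i j hij
        rw [Finset.disjoint_left]
        intro z hz1 hz2
        obtain ⟨y1, hy1, hy1e⟩ := Finset.mem_image.1 hz1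
        obtain ⟨y2, hy2, hy2e⟩ := Finset.mem_image.1 hz2
        have : y1 = y2 := Fin.val_injective (hy1e.trans hy2e.symm)
        exact Finset.disjoint_left.1 (hPd i j hij) hy1 (this ▸ hy2)
      · intro i x hx
        obtain ⟨y, _, hye⟩ := Finset.mem_image.1 hx
        rw [← hye]
        exact y.isLt
      · intro i
        rw [Finset.sum_image (fun y1 _ y2 _ h => Fin.val_injective h)]
        rw [Finset.sum_congr rfl (fun y _ => hWfin y)]
        exact max_le (hPval i) (Finset.sum_nonneg (fun y _ => hw y))
    have hsup := csSup_le hne hforall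
    calc (2*(n:ℝ))/(3*(n:ℝ)-1) * sSup {x : ℝ | ∃ P : Fin n → Finset (Fin m),
          (∀ i j, i ≠ j → Disjoint (P i) (P j)) ∧
          Finset.univ.biUnion P = Finset.univ ∧
          ∀ j, x ≤ ∑ i ∈ P j, w i}
        ≤ (2*(n:ℝ))/(3*(n:ℝ)-1) * ((sSup {x : ℝ | ∃ (k : ℕ) (z t : ℕ → ℕ),
          n - q < k ∧ k ≤ m ∧
          Monotone z ∧ z 0 = 0 ∧ z n = k ∧ (∀ j, j ≤ n - q → z j = j) ∧
          Monotone t ∧ t 0 = k ∧ t n = m ∧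
          ∀ j : Fin n, x ≤ ∑ i ∈ Finset.univ.filter (fun i : Fin m =>
            (z j.val ≤ i.val ∧ i.val < z (j.val + 1)) ∨
            (t (n - 1 - j.val) ≤ i.val ∧ i.val < t (n - j.val))), w i})
          / ((2*(n:ℝ))/(3*(n:ℝ)-1))) := mul_le_mul_of_nonneg_left hsup hc0.le
      _ = _ := by
          rw [mul_comm, div_mul_cancel₀]
          exact hc0.ne'
  · -- degenerate case : m < n
    push_neg at hmn
    have hMMSset : {x : ℝ | ∃ P : Fin n → Finset (Fin m),
        (∀ i j, i ≠ j → Disjoint (P i) (P j)) ∧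
        Finset.univ.biUnion P = Finset.univ ∧
        ∀ j, x ≤ ∑ i ∈ P j, w i} = Set.Iic 0 := by
      ext x
      constructor
      · rintro ⟨P, hPd, hPcov, hPval⟩
        have hcard : ∑ j ∈ Finset.univ, (P j).card = m := by
          rw [← Finset.card_biUnion (fun i _ j _ hij => hPd i j hij), hPcov,
            Finset.card_univ, Fintype.card_fin]
        have hempty : ∃ j, P j = ∅ := by
          by_contra hno
          push_neg at hno
          have h1 : ∀ j ∈ (Finset.univ : Finset (Fin n)), 1 ≤ (P j).card :=
            fun j _ => Finset.card_pos.2 (hno j)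
          have h2 : (Finset.univ : Finset (Fin n)).card ≤ ∑ j ∈ Finset.univ, (P j).card := by
            calc (Finset.univ : Finset (Fin n)).card
                = ∑ _j ∈ (Finset.univ : Finset (Fin n)), 1 := by
                  rw [Finset.sum_const, smul_eq_mul, mul_one]
              _ ≤ _ := Finset.sum_le_sum h1
          rw [Finset.card_univ, Fintype.card_fin] at h2
          omega
        obtain ⟨j0, hj0⟩ := hempty
        have := hPval j0
        rw [hj0, Finset.sum_empty] at this
        exact Set.mem_Iic.2 this
      · intro hx
        refine ⟨fun i => if i = (⟨0, by omega⟩ : Fin n) then Finset.univ else ∅, ?_, ?_, ?_⟩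
        · intro i j hij
          dsimp only
          split_ifs with h1 h2 h2
          · exact absurd (h1.trans h2.symm) hij
          · simp
          · simp
          · simp
        · apply Finset.eq_univ_of_forall
          intro y
          exact Finset.mem_biUnion.2 ⟨⟨0, by omega⟩, Finset.mem_univ _, by simp⟩
        · intro j
          dsimp only
          refine le_trans hx ?_
          split_ifs
          · exact Finset.sum_nonneg (fun i _ => hw i)
          · simp
    rw [hMMSset, csSup_Iic, mul_zero]
    by_cases hk : n - q < m
    · apply le_csSup hbdd
      refine ⟨m, fun j => if j ≤ n - q then j else m, fun _ => m, hk, le_rfl, ?_, ?_, ?_,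
        ?_, monotone_const, rfl, rfl, ?_⟩
      · intro a b hab
        dsimp only
        split_ifs with h1 h2 h2
        · exact hab
        · omega
        · omega
        · exact le_rfl
      · beta_reduce
        rw [if_pos (Nat.zero_le _)]
      · beta_reduce
        rw [if_neg (by omega : ¬ (n ≤ n - q))]
      · intro j hj
        beta_reduce
        rw [if_pos hj]
      · intro j
        exact Finset.sum_nonneg (fun i _ => hw i)
    · have hempty : {x : ℝ | ∃ (k : ℕ) (z t : ℕ → ℕ),
          n - q < k ∧ k ≤ m ∧
          Monotone z ∧ z 0 = 0 ∧ z n = k ∧ (∀ j, j ≤ n - q → z j = j) ∧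
          Monotone t ∧ t 0 = k ∧ t n = m ∧
          ∀ j : Fin n, x ≤ ∑ i ∈ Finset.univ.filter (fun i : Fin m =>
            (z j.val ≤ i.val ∧ i.val < z (j.val + 1)) ∨
            (t (n - 1 - j.val) ≤ i.val ∧ i.val < t (n - j.val))), w i} = ∅ := by
        apply Set.eq_empty_iff_forall_notMem.2
        rintro x ⟨k, z, t, hk1, hk2, _⟩
        omega
      rw [hempty, Real.sSup_empty]
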